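/- Let X be a well-filtered T0 space and {K_i}_{i∈I} a filtered family of nonempty compact saturated subsets of X. Write ⋂_{i∈I} K_i = ↑C with C a nonempty antichain of minimal elements. Then for each a ∈ C, ⋂_{i∈I} ↑(↓a ∩ K_i) = ↑a. -/
import Mathlib


open Set

/-- The specialization order of the paper: `x ≤ y` iff `x ∈ cl {y}`. -/
def specLE {X : Type*} [TopologicalSpace X] (x y : X) : Prop := x ∈ closure ({y} : Set X)

/-- Upward closure `↑A` w.r.t. the specialization order. -/
def upSet {X : Type*} [TopologicalSpace X] (A : Set X) : Set X := {y | ∃ x ∈ A, specLE x y}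

/-- Downward closure `↓A` w.r.t. the specialization order. -/
def downSet {X : Type*} [TopologicalSpace X] (A : Set X) : Set X := {y | ∃ x ∈ A, specLE y x}

/-- The saturation of a set: the intersection of all open sets containing it. -/
def sat {X : Type*} [TopologicalSpace X] (A : Set X) : Set X := ⋂₀ {U | IsOpen U ∧ A ⊆ U}

/-- A `T0` space is well-filtered if for every filtered family `𝓕` of compact saturated
sets and every open `U` with `⋂₀ 𝓕 ⊆ U`, some member of `𝓕` is contained in `U`. -/
def WellFilteredSpace (X : Type*) [TopologicalSpace X] : Prop :=
  ∀ 𝓕 : Set (Set X), 𝓕.Nonempty →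
    (∀ K ∈ 𝓕, IsCompact K ∧ sat K = K) →
    (∀ K₁ ∈ 𝓕, ∀ K₂ ∈ 𝓕, ∃ K₃ ∈ 𝓕, K₃ ⊆ K₁ ∩ K₂) →
    ∀ U : Set X, IsOpen U → ⋂₀ 𝓕 ⊆ U → ∃ K ∈ 𝓕, K ⊆ U

section Aux

variable {X : Type*} [TopologicalSpace X]

lemma specLE_refl (x : X) : specLE x x := subset_closure rfl

lemma specLE_trans {x y z : X} (h₁ : specLE x y) (h₂ : specLE y z) : specLE x z := by
  have : closure ({y} : Set X) ⊆ closure ({z} : Set X) :=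
    closure_minimal (singleton_subset_iff.mpr h₂) isClosed_closure
  exact this h₁

lemma specLE_antisymm [T0Space X] {x y : X} (h₁ : specLE x y) (h₂ : specLE y x) : x = y :=
  ((specializes_iff_mem_closure.mpr h₂).antisymm (specializes_iff_mem_closure.mpr h₁)).eq

lemma subset_upSet (A : Set X) : A ⊆ upSet A := fun x hx => ⟨x, hx, specLE_refl x⟩

lemma upSet_mono {A B : Set X} (h : A ⊆ B) : upSet A ⊆ upSet B :=
  fun _ ⟨x, hx, hxy⟩ => ⟨x, h hx, hxy⟩

lemma sat_eq_upSet (A : Set X) : sat A = upSet A := by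
  ext y
  constructor
  · intro hy
    by_contra hcon
    have hA : A ⊆ (closure ({y} : Set X))ᶜ := by
      intro x hx
      intro hxc
      exact hcon ⟨x, hx, hxc⟩
    have := hy ((closure ({y} : Set X))ᶜ) ⟨isClosed_closure.isOpen_compl, hA⟩
    exact this (subset_closure rfl)
  · rintro ⟨x, hx, hxy⟩ U ⟨hU, hAU⟩
    rcases mem_closure_iff.mp hxy U hU (hAU hx) with ⟨z, hzU, hz⟩
    exact mem_singleton_iff.mp hz ▸ hzU

lemma subset_sat (A : Set X) : A ⊆ sat A := fun _ hx _ ⟨_, hAU⟩ => hAU hx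

lemma sat_mono {A B : Set X} (h : A ⊆ B) : sat A ⊆ sat B :=
  fun y hy U ⟨hU, hBU⟩ => hy U ⟨hU, h.trans hBU⟩

lemma sat_subset_open {A U : Set X} (hU : IsOpen U) (h : A ⊆ U) : sat A ⊆ U :=
  fun _ hy => hy U ⟨hU, h⟩

lemma sat_upSet (A : Set X) : sat (upSet A) = upSet A := by
  rw [← sat_eq_upSet]
  apply Subset.antisymm _ (subset_sat _)
  intro y hy U ⟨hU, hAU⟩
  exact hy U ⟨hU, sat_subset_open hU hAU⟩

lemma upSet_isCompact {A : Set X} (hA : IsCompact A) : IsCompact (upSet A) := by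
  apply isCompact_of_finite_subcover
  intro ι U hU hcov
  rcases hA.elim_finite_subcover U hU ((subset_upSet A).trans hcov) with ⟨t, ht⟩
  refine ⟨t, ?_⟩
  rw [← sat_eq_upSet]
  exact sat_subset_open (isOpen_biUnion fun i _ => hU i) ht

lemma downSet_singleton (a : X) : downSet ({a} : Set X) = closure {a} := by
  ext y
  constructor
  · rintro ⟨x, rfl, hx⟩
    exact hx
  · intro hy
    exact ⟨a, rfl, hy⟩

end Aux

theorem stmt9 {X : Type*} [TopologicalSpace X] [T0Space X]
    (hwf : WellFilteredSpace X) {ι : Type*} [Nonempty ι] (K : ι → Set X)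
    (hne : ∀ i, (K i).Nonempty) (hc : ∀ i, IsCompact (K i)) (hs : ∀ i, sat (K i) = K i)
    (hfil : ∀ i j : ι, ∃ k : ι, K k ⊆ K i ∩ K j)
    (C : Set X) (hCne : C.Nonempty) (hCanti : IsAntichain specLE C)
    (hC : ⋂ i, K i = upSet C) :
    ∀ a ∈ C, ⋂ i, upSet (downSet {a} ∩ K i) = upSet {a} := by
  intro a ha
  have haK : ∀ i, a ∈ K i := by
    intro i
    have h1 : a ∈ upSet C := ⟨a, ha, specLE_refl a⟩
    rw [← hC] at h1
    exact mem_iInter.mp h1 i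
  have haN : ∀ i, a ∈ downSet ({a} : Set X) ∩ K i :=
    fun i => ⟨⟨a, rfl, specLE_refl a⟩, haK i⟩
  apply Subset.antisymm
  · intro b hb
    set N : ι → Set X := fun i => downSet ({a} : Set X) ∩ K i with hNdef
    have hbN : ∀ i, ∃ x ∈ N i, specLE x b := fun i => mem_iInter.mp hb i
    set 𝓕 : Set (Set X) := Set.range (fun i => upSet (N i)) with h𝓕
    have hclosedA : IsClosed (downSet ({a} : Set X)) := by
      rw [downSet_singleton]; exact isClosed_closure
    have hclosedB : IsClosed (downSet ({b} : Set X)) := by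
      rw [downSet_singleton]; exact isClosed_closure
    have hNcomp : ∀ i, IsCompact (N i) := fun i => (hc i).inter_left hclosedA
    -- the open set
    set U : Set X := (downSet ({a} : Set X) ∩ downSet ({b} : Set X))ᶜ with hUdef
    have hUopen : IsOpen U := (hclosedA.inter hclosedB).isOpen_compl
    have hnot : ¬ ⋂₀ 𝓕 ⊆ U := by
      intro h
      obtain ⟨S, hS, hSU⟩ := hwf 𝓕 (range_nonempty _)
        (by
          rintro S ⟨i, rfl⟩
          exact ⟨upSet_isCompact (hNcomp i), sat_upSet _⟩)
        (by
          rintro S₁ ⟨i, rfl⟩ S₂ ⟨j, rfl⟩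
          obtain ⟨k, hk⟩ := hfil i j
          refine ⟨upSet (N k), ⟨k, rfl⟩, subset_inter ?_ ?_⟩
          · exact upSet_mono (inter_subset_inter_right _ (hk.trans inter_subset_left))
          · exact upSet_mono (inter_subset_inter_right _ (hk.trans inter_subset_right)))
        U hUopen h
      obtain ⟨i, rfl⟩ := hS
      obtain ⟨x, hx, hxb⟩ := hbN i
      exact hSU (subset_upSet _ hx) ⟨hx.1, ⟨b, rfl, hxb⟩⟩
    rw [not_subset] at hnot
    obtain ⟨z, hz𝓕, hzU⟩ := hnot
    rw [hUdef, mem_compl_iff, not_not] at hzU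
    obtain ⟨hza, hzb⟩ := hzU
    have hzK : ∀ i, z ∈ K i := by
      intro i
      have h1 : upSet (N i) ⊆ K i := by
        rw [← hs i, ← sat_eq_upSet]
        exact sat_mono inter_subset_right
      exact h1 (hz𝓕 _ ⟨i, rfl⟩)
    have hzC : z ∈ upSet C := by
      rw [← hC]; exact mem_iInter.mpr hzK
    obtain ⟨c', hc', hcz⟩ := hzC
    obtain ⟨w, hw, hza'⟩ := hza
    rw [mem_singleton_iff] at hw
    rw [hw] at hza'
    have hca : specLE c' a := specLE_trans hcz hza'
    have hceq : c' = a := by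
      by_contra hne'
      exact hCanti hc' ha hne' hca
    have haz : specLE a z := hceq ▸ hcz
    have hza2 : z = a := specLE_antisymm hza' haz
    obtain ⟨w', hw', hzb'⟩ := hzb
    rw [mem_singleton_iff] at hw'
    rw [hw'] at hzb'
    exact ⟨a, rfl, hza2 ▸ hzb'⟩
  · rintro b ⟨x, hx, hxb⟩
    rw [mem_singleton_iff] at hx
    rw [hx] at hxb
    exact mem_iInter.mpr fun i => ⟨a, haN i, hxb⟩
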